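/- Let m be a positive integer and (a_i)_{i=1}^m, (s_i)_{i=1}^m sequences of positive reals. The convex quadratic problem of minimizing ∑_{t=1}^m (a_t x_t² − 2√(s_t) x_t) subject to 0 ≤ x_1 ≤ x_2 ≤ ⋯ ≤ x_m admits a unique optimal solution, and every component of this optimal solution is strictly positive. -/
import Mathlib

open Finset

private lemma aux_exists (m : ℕ) (hm : 0 < m) (a b : Fin m → ℝ)
    (ha : ∀ t, 0 < a t) (hb : ∀ t, 0 < b t) :
    ∃ x : Fin m → ℝ, ((∀ t, 0 ≤ x t) ∧ Monotone x) ∧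
      ∀ y : Fin m → ℝ, ((∀ t, 0 ≤ y t) ∧ Monotone y) →
        ∑ t, (a t * x t ^ 2 - 2 * b t * x t) ≤
          ∑ t, (a t * y t ^ 2 - 2 * b t * y t) := by
  haveI : Nonempty (Fin m) := ⟨⟨0, hm⟩⟩
  set f : (Fin m → ℝ) → ℝ := fun x => ∑ t, (a t * x t ^ 2 - 2 * b t * x t) with hf
  set last : Fin m := ⟨m - 1, by omega⟩ with hlast
  have hle_last : ∀ t : Fin m, t ≤ last := by
    intro t
    rw [Fin.le_def]
    have := t.isLt
    simp only [hlast]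
    omega
  set B : ℝ := ∑ t, b t with hB
  have hBpos : 0 < B := Finset.sum_pos (fun t _ => hb t) univ_nonempty
  set R : ℝ := 2 * B / a last with hR
  have hRnn : 0 ≤ R := div_nonneg (by linarith) (ha last).le
  set C : Set (Fin m → ℝ) :=
    {x | (∀ t, 0 ≤ x t) ∧ Monotone x ∧ ∀ t, x t ≤ R} with hC
  have hCclosed : IsClosed C := by
    have : C = (⋂ t, {x : Fin m → ℝ | 0 ≤ x t}) ∩
        ((⋂ i, ⋂ j, ⋂ (_ : i ≤ j), {x : Fin m → ℝ | x i ≤ x j}) ∩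
          ⋂ t, {x : Fin m → ℝ | x t ≤ R}) := by
      ext x
      simp only [hC, Set.mem_setOf_eq, Set.mem_inter_iff, Set.mem_iInter, Monotone]
    rw [this]
    exact (isClosed_iInter fun t => isClosed_le continuous_const (continuous_apply t)).inter
      ((isClosed_iInter fun i => isClosed_iInter fun j => isClosed_iInter fun _ =>
        isClosed_le (continuous_apply i) (continuous_apply j)).inter
        (isClosed_iInter fun t => isClosed_le (continuous_apply t) continuous_const))
  have hCcompact : IsCompact C := by
    refine (isCompact_Icc (a := (0 : Fin m → ℝ)) (b := fun _ => R)).of_isClosed_subset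
      hCclosed ?_
    intro x hx
    exact ⟨fun t => hx.1 t, fun t => hx.2.2 t⟩
  have h0C : (0 : Fin m → ℝ) ∈ C :=
    ⟨fun t => le_refl 0, monotone_const, fun t => hRnn⟩
  have hfc : Continuous f := by
    apply continuous_finset_sum
    intro t _
    exact ((continuous_const.mul ((continuous_apply t).pow 2)).sub
      (continuous_const.mul (continuous_apply t)))
  obtain ⟨x, hxC, hxmin⟩ :=
    hCcompact.exists_isMinOn ⟨0, h0C⟩ hfc.continuousOn
  have hf0 : f 0 = 0 := by simp [hf]
  refine ⟨x, ⟨hxC.1, hxC.2.1⟩, ?_⟩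
  intro y hy
  by_cases hyR : y last ≤ R
  · exact hxmin ⟨hy.1, hy.2, fun t => (hy.2 (hle_last t)).trans hyR⟩
  · push_neg at hyR
    have hfx0 : f x ≤ 0 := hf0 ▸ hxmin h0C
    have h1 : ∑ t, a t * y t ^ 2 ≥ a last * y last ^ 2 :=
      Finset.single_le_sum (f := fun t => a t * y t ^ 2)
        (fun t _ => mul_nonneg (ha t).le (sq_nonneg _)) (mem_univ last)
    have h2 : ∑ t, 2 * b t * y t ≤ 2 * B * y last := by
      have step : ∑ t, 2 * b t * y t ≤ ∑ t, 2 * b t * y last :=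
        Finset.sum_le_sum fun t _ => by nlinarith [hy.2 (hle_last t), (hb t).le]
      have eq2 : ∑ t, 2 * b t * y last = 2 * B * y last := by
        simp only [hB, Finset.mul_sum, Finset.sum_mul]
        try exact Finset.sum_congr rfl fun _ _ => by ring
      linarith
    have hfy : f y ≥ a last * y last ^ 2 - 2 * B * y last := by
      have : f y = ∑ t, a t * y t ^ 2 - ∑ t, 2 * b t * y t := by
        simp only [hf]
        rw [← Finset.sum_sub_distrib]
      rw [this]
      linarith
    have hylast : 2 * B < a last * y last := by
      rw [hR] at hyR
      have := (div_lt_iff₀ (ha last)).mp hyR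
      linarith [mul_comm (y last) (a last)]
    have hypos : 0 < y last := lt_of_le_of_lt hRnn hyR
    nlinarith

private lemma aux_unique (m : ℕ) (a b : Fin m → ℝ)
    (ha : ∀ t, 0 < a t)
    (x y : Fin m → ℝ)
    (hx : (∀ t, 0 ≤ x t) ∧ Monotone x) (hy : (∀ t, 0 ≤ y t) ∧ Monotone y)
    (hxmin : ∀ z : Fin m → ℝ, ((∀ t, 0 ≤ z t) ∧ Monotone z) →
        ∑ t, (a t * x t ^ 2 - 2 * b t * x t) ≤
          ∑ t, (a t * z t ^ 2 - 2 * b t * z t))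
    (hymin : ∀ z : Fin m → ℝ, ((∀ t, 0 ≤ z t) ∧ Monotone z) →
        ∑ t, (a t * y t ^ 2 - 2 * b t * y t) ≤
          ∑ t, (a t * z t ^ 2 - 2 * b t * z t)) :
    y = x := by
  set f : (Fin m → ℝ) → ℝ := fun z => ∑ t, (a t * z t ^ 2 - 2 * b t * z t) with hf
  have hfeq : f y = f x := le_antisymm (hymin x hx) (hxmin y hy)
  set z : Fin m → ℝ := fun t => (x t + y t) / 2 with hz
  have hzK : (∀ t, 0 ≤ z t) ∧ Monotone z := by
    constructor
    · intro t
      have := hx.1 t; have := hy.1 t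
      simp only [hz]; linarith
    · exact (hx.2.add hy.2).div_const (by norm_num)
  set S : ℝ := ∑ t, a t * ((x t - y t) / 2) ^ 2 with hS
  have key : f z + S = (f x + f y) / 2 := by
    have : ∀ t : Fin m, (a t * z t ^ 2 - 2 * b t * z t) + a t * ((x t - y t) / 2) ^ 2
        = ((a t * x t ^ 2 - 2 * b t * x t) + (a t * y t ^ 2 - 2 * b t * y t)) / 2 := by
      intro t; simp only [hz]; ring
    calc f z + S = ∑ t, ((a t * z t ^ 2 - 2 * b t * z t) + a t * ((x t - y t) / 2) ^ 2) :=
          (Finset.sum_add_distrib).symm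
      _ = ∑ t, ((a t * x t ^ 2 - 2 * b t * x t) + (a t * y t ^ 2 - 2 * b t * y t)) / 2 :=
          Finset.sum_congr rfl fun t _ => this t
      _ = (f x + f y) / 2 := by rw [← Finset.sum_div, Finset.sum_add_distrib]
  have hxz : f x ≤ f z := hxmin z hzK
  have hS0 : S ≤ 0 := by rw [hfeq] at key; linarith
  have hSnn : ∀ t ∈ univ, 0 ≤ a t * ((x t - y t) / 2) ^ 2 :=
    fun t _ => mul_nonneg (ha t).le (sq_nonneg _)
  have hSz : S = 0 := le_antisymm hS0 (Finset.sum_nonneg hSnn)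
  funext t
  have := (Finset.sum_eq_zero_iff_of_nonneg hSnn).mp hSz t (mem_univ t)
  have h2 : ((x t - y t) / 2) ^ 2 = 0 := by
    rcases mul_eq_zero.mp this with h | h
    · exact absurd h (ha t).ne'
    · exact h
  have := pow_eq_zero_iff (n := 2) (by norm_num) |>.mp h2
  linarith [this]

private lemma aux_pos (m : ℕ) (hm : 0 < m) (a b : Fin m → ℝ)
    (ha : ∀ t, 0 < a t) (hb : ∀ t, 0 < b t)
    (x : Fin m → ℝ) (hx : (∀ t, 0 ≤ x t) ∧ Monotone x)
    (hxmin : ∀ z : Fin m → ℝ, ((∀ t, 0 ≤ z t) ∧ Monotone z) →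
        ∑ t, (a t * x t ^ 2 - 2 * b t * x t) ≤
          ∑ t, (a t * z t ^ 2 - 2 * b t * z t)) :
    ∀ t, 0 < x t := by
  haveI : Nonempty (Fin m) := ⟨⟨0, hm⟩⟩
  intro t0
  by_contra h
  push_neg at h
  have hx0 : x t0 = 0 := le_antisymm h (hx.1 t0)
  set ε : ℝ := Finset.univ.inf' univ_nonempty (fun t => b t / a t) with hε
  have hεpos : 0 < ε := by
    rw [hε, Finset.lt_inf'_iff]
    exact fun t _ => div_pos (hb t) (ha t)
  have hεle : ∀ t, a t * ε ≤ b t := by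
    intro t
    have : ε ≤ b t / a t := Finset.inf'_le _ (mem_univ t)
    rw [le_div_iff₀ (ha t)] at this
    linarith
  set y : Fin m → ℝ := fun t => max (x t) ε with hy
  have hyK : (∀ t, 0 ≤ y t) ∧ Monotone y :=
    ⟨fun t => le_trans (hx.1 t) (le_max_left _ _), hx.2.max monotone_const⟩
  have hterm : ∀ t : Fin m, a t * y t ^ 2 - 2 * b t * y t ≤ a t * x t ^ 2 - 2 * b t * x t := by
    intro t
    rcases le_or_gt ε (x t) with hle | hlt
    · simp only [hy, max_eq_left hle, le_refl]
    · simp only [hy, max_eq_right hlt.le]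
      have h1 := hεle t
      have h2 : a t * x t < a t * ε := by nlinarith [ha t]
      nlinarith [hx.1 t]
  have hstrict : a t0 * y t0 ^ 2 - 2 * b t0 * y t0 < a t0 * x t0 ^ 2 - 2 * b t0 * x t0 := by
    have : y t0 = ε := by simp [hy, hx0, hεpos.le]
    rw [this, hx0]
    have h1 := hεle t0
    nlinarith [hb t0]
  have hlt : ∑ u, (a u * y u ^ 2 - 2 * b u * y u) < ∑ u, (a u * x u ^ 2 - 2 * b u * x u) :=
    Finset.sum_lt_sum (fun u _ => hterm u) ⟨t0, mem_univ t0, hstrict⟩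
  exact absurd (hxmin y hyK) (not_le.mpr hlt)

/-- The convex quadratic problem: minimize `∑ t, a t * x t ^ 2 - 2 * √(s t) * x t`
over nondecreasing nonnegative sequences `x`. It admits a unique optimal solution,
all of whose components are strictly positive. -/
theorem stmt1 (m : ℕ) (hm : 0 < m) (a s : Fin m → ℝ)
    (ha : ∀ t, 0 < a t) (hs : ∀ t, 0 < s t) :
    (∃! x : Fin m → ℝ,
      ((∀ t, 0 ≤ x t) ∧ Monotone x) ∧
      (∀ y : Fin m → ℝ, ((∀ t, 0 ≤ y t) ∧ Monotone y) →
        ∑ t, (a t * x t ^ 2 - 2 * Real.sqrt (s t) * x t) ≤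
          ∑ t, (a t * y t ^ 2 - 2 * Real.sqrt (s t) * y t))) ∧
    (∀ x : Fin m → ℝ,
      ((∀ t, 0 ≤ x t) ∧ Monotone x) →
      (∀ y : Fin m → ℝ, ((∀ t, 0 ≤ y t) ∧ Monotone y) →
        ∑ t, (a t * x t ^ 2 - 2 * Real.sqrt (s t) * x t) ≤
          ∑ t, (a t * y t ^ 2 - 2 * Real.sqrt (s t) * y t)) →
      ∀ t, 0 < x t) := by
  have hb : ∀ t, 0 < Real.sqrt (s t) := fun t => Real.sqrt_pos.mpr (hs t)
  obtain ⟨x, hxK, hxmin⟩ := aux_exists m hm a (fun t => Real.sqrt (s t)) ha hb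
  refine ⟨⟨x, ⟨hxK, hxmin⟩, ?_⟩, ?_⟩
  · rintro y ⟨hyK, hymin⟩
    exact aux_unique m a (fun t => Real.sqrt (s t)) ha x y hxK hyK hxmin hymin
  · intro z hzK hzmin
    exact aux_pos m hm a (fun t => Real.sqrt (s t)) ha hb z hzK hzmin
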